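/- Let A and B be two finite multisets in ℤ_p that are weakly equivalent, and suppose that A is p-adic non-Liouville. Then there exist Liouville partitions A_1, A_2 of A and B_1, B_2 of B such that: (a) the multisets A_1 and B_1 consist entirely of integers; and (b) the multisets A_2 and B_2 are weakly equivalent and contain no integers and no p-adic Liouville numbers. In particular, B is also p-adic non-Liouville. -/

import Mathlib

open Filter

/-- `padicDist p m a` is `d_m(a) = min {|h| : h ∈ ℤ, a ≡ h (mod p^m ℤ_p)}`. -/
noncomputable def padicDist (p : ℕ) [Fact p.Prime] (m : ℕ) (a : ℤ_[p]) : ℕ :=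
  sInf {k : ℕ | ∃ h : ℤ, h.natAbs = k ∧ (p : ℤ_[p]) ^ m ∣ a - (h : ℤ_[p])}

/-- `a ∈ ℤ_p` is a p-adic Liouville number if `a ∉ ℤ` and
`liminf_{m→∞} d_m(a)/m < +∞`. -/
def IsPadicLiouville (p : ℕ) [Fact p.Prime] (a : ℤ_[p]) : Prop :=
  (∀ n : ℤ, a ≠ (n : ℤ_[p])) ∧
    liminf (fun m : ℕ => (((padicDist p m a : ℝ) / (m : ℝ)) : EReal)) atTop < (⊤ : EReal)

/-- Two finite multisets in `ℤ_p` are weakly equivalent: there exist orderings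
`a_1,…,a_n`, `b_1,…,b_n`, a constant `c > 0`, and for each `m ≥ 1` a permutation `σ_m`
with `d_m(a_{σ_m i} - b_i) ≤ c m`. -/
def WeaklyEquivalent (p : ℕ) [Fact p.Prime] (A B : Multiset ℤ_[p]) : Prop :=
  ∃ (n : ℕ) (a b : Fin n → ℤ_[p]) (c : ℝ),
    A = ↑(List.ofFn a) ∧ B = ↑(List.ofFn b) ∧ 0 < c ∧
    ∀ m : ℕ, 1 ≤ m → ∃ σ : Equiv.Perm (Fin n),
      ∀ i, (padicDist p m (a (σ i) - b i) : ℝ) ≤ c * m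

/-- Two finite multisets in `ℤ_p` are equivalent: there exist orderings with
`a_i - b_i ∈ ℤ` for all `i`. -/
def EquivalentMultisets (p : ℕ) [Fact p.Prime] (A B : Multiset ℤ_[p]) : Prop :=
  ∃ (n : ℕ) (a b : Fin n → ℤ_[p]),
    A = ↑(List.ofFn a) ∧ B = ↑(List.ofFn b) ∧
    ∀ i, ∃ k : ℤ, a i - b i = (k : ℤ_[p])

/-- `P 0, …, P (k-1)` form a Liouville partition of `A`: their multiset union is `A` and
no two elements of distinct parts differ by an integer or a p-adic Liouville number. -/
def IsLiouvillePartition (p : ℕ) [Fact p.Prime] (A : Multiset ℤ_[p]) {k : ℕ}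
    (P : Fin k → Multiset ℤ_[p]) : Prop :=
  (∑ g, P g) = A ∧
    ∀ g h : Fin k, g ≠ h → ∀ x ∈ P g, ∀ y ∈ P h,
      ¬ ((∃ n : ℤ, x - y = (n : ℤ_[p])) ∨ IsPadicLiouville p (x - y))

/-- A multiset is p-adic non-Liouville if it contains no p-adic Liouville number. -/
def PadicNonLiouvilleMultiset (p : ℕ) [Fact p.Prime] (A : Multiset ℤ_[p]) : Prop :=
  ∀ a ∈ A, ¬ IsPadicLiouville p a

/-- The difference multiset `A - A = {a - a' : a, a' ∈ A}`. -/
noncomputable def diffMultiset (p : ℕ) [Fact p.Prime] (A : Multiset ℤ_[p]) : Multiset ℤ_[p] :=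
  A.bind fun x => A.map fun y => x - y

/-! ### Auxiliary lemmas about `padicDist` -/

section AuxDist
variable {p : ℕ} [hp : Fact p.Prime]

lemma padicDist_spec (m : ℕ) (x : ℤ_[p]) :
    ∃ h : ℤ, h.natAbs = padicDist p m x ∧ (p : ℤ_[p]) ^ m ∣ x - (h : ℤ_[p]) := by
  have hne : {k : ℕ | ∃ h : ℤ, h.natAbs = k ∧ (p : ℤ_[p]) ^ m ∣ x - (h : ℤ_[p])}.Nonempty := by
    refine ⟨(x.appr m), ((x.appr m : ℤ)), by simp, ?_⟩
    have := x.appr_spec m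
    rw [Ideal.mem_span_singleton] at this
    simpa using this
  exact Nat.sInf_mem hne

lemma padicDist_le (m : ℕ) (x : ℤ_[p]) {h : ℤ} (hd : (p : ℤ_[p]) ^ m ∣ x - (h : ℤ_[p])) :
    padicDist p m x ≤ h.natAbs := Nat.sInf_le ⟨h, rfl, hd⟩

lemma padicDist_add_le (m : ℕ) (x y : ℤ_[p]) :
    padicDist p m (x + y) ≤ padicDist p m x + padicDist p m y := by
  obtain ⟨h, hh, hd⟩ := padicDist_spec m x
  obtain ⟨k, hk, kd⟩ := padicDist_spec m y
  calc padicDist p m (x + y) ≤ (h + k).natAbs := by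
        refine padicDist_le m _ ?_
        push_cast
        convert dvd_add hd kd using 1
        ring
    _ ≤ h.natAbs + k.natAbs := Int.natAbs_add_le h k
    _ = _ := by rw [hh, hk]

lemma padicDist_neg (m : ℕ) (x : ℤ_[p]) : padicDist p m (-x) = padicDist p m x := by
  have key : ∀ z : ℤ_[p], padicDist p m (-z) ≤ padicDist p m z := by
    intro z
    obtain ⟨h, hh, hd⟩ := padicDist_spec m z
    have h2 : (p : ℤ_[p]) ^ m ∣ -z - ((-h : ℤ) : ℤ_[p]) := by
      push_cast
      rw [show -z - -(h : ℤ_[p]) = -(z - h) by ring]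
      exact dvd_neg.mpr hd
    have := padicDist_le m (-z) h2
    rwa [Int.natAbs_neg, hh] at this
  refine le_antisymm (key x) ?_
  have := key (-x)
  rwa [neg_neg] at this

lemma padicDist_mono (x : ℤ_[p]) {m m' : ℕ} (hmm : m ≤ m') :
    padicDist p m x ≤ padicDist p m' x := by
  obtain ⟨h, hh, hd⟩ := padicDist_spec m' x
  rw [← hh]
  exact padicDist_le m x (dvd_trans (pow_dvd_pow _ hmm) hd)

lemma padicDist_intCast_le (m : ℕ) (k : ℤ) : padicDist p m ((k : ℤ_[p])) ≤ k.natAbs :=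
  padicDist_le m _ (by simp)

lemma padicDist_le_add (m : ℕ) (x y : ℤ_[p]) :
    padicDist p m x ≤ padicDist p m (x - y) + padicDist p m y := by
  have := padicDist_add_le m (x - y) y
  simpa using this

lemma padicDist_le_add' (m : ℕ) (x y : ℤ_[p]) :
    padicDist p m x ≤ padicDist p m (y - x) + padicDist p m y := by
  have := padicDist_le_add m x y
  rwa [show x - y = -(y - x) by ring, padicDist_neg] at this

end AuxDist

/-! ### A characterization of `IsPadicLiouville` -/

/-- `x` is an integer (i.e. in the image of `ℤ` in `ℤ_[p]`). -/
def IsIntPadic (p : ℕ) [Fact p.Prime] (x : ℤ_[p]) : Prop := ∃ k : ℤ, x = (k : ℤ_[p])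

/-- The set of scales at which `x` is `C`-linearly approximable by integers. -/
def BddSet (p : ℕ) [Fact p.Prime] (x : ℤ_[p]) (C : ℝ) : Set ℕ :=
  {m : ℕ | 1 ≤ m ∧ (padicDist p m x : ℝ) ≤ C * m}

section AuxLiou
variable {p : ℕ} [hp : Fact p.Prime]

lemma liouville_iff {x : ℤ_[p]} :
    IsPadicLiouville p x ↔
      (∀ k : ℤ, x ≠ (k : ℤ_[p])) ∧ ∃ C : ℝ, 0 < C ∧ (BddSet p x C).Infinite := by
  constructor
  · rintro ⟨h1, h2⟩
    refine ⟨h1, ?_⟩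
    obtain ⟨r, hr1, -⟩ := EReal.lt_iff_exists_real_btwn.mp h2
    have hfreq : ∃ᶠ m in atTop,
        (((padicDist p m x : ℝ) / (m : ℝ)) : EReal) < (r : EReal) :=
      frequently_lt_of_liminf_lt (by isBoundedDefault) hr1
    refine ⟨max r 1, lt_max_iff.mpr (Or.inr one_pos), ?_⟩
    show ({m : ℕ | 1 ≤ m ∧ (padicDist p m x : ℝ) ≤ (max r 1) * m}).Infinite
    rw [← Nat.frequently_atTop_iff_infinite]
    refine (hfreq.and_eventually (eventually_ge_atTop 1)).mono ?_
    rintro m ⟨hlt, hm1⟩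
    have hm0 : (0 : ℝ) < m := by exact_mod_cast hm1
    rw [← EReal.coe_div] at hlt
    have hdiv : (padicDist p m x : ℝ) / m < r := EReal.coe_lt_coe_iff.mp hlt
    have : (padicDist p m x : ℝ) < r * m := (div_lt_iff₀ hm0).mp hdiv
    exact ⟨hm1, this.le.trans (mul_le_mul_of_nonneg_right (le_max_left r 1) hm0.le)⟩
  · rintro ⟨h1, C, hC, hinf⟩
    refine ⟨h1, ?_⟩
    have hfreq := Nat.frequently_atTop_iff_infinite.mpr hinf
    have hle : liminf (fun m : ℕ => (((padicDist p m x : ℝ) / (m : ℝ)) : EReal)) atTop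
        ≤ (C : EReal) := by
      refine liminf_le_of_frequently_le' (hfreq.mono ?_)
      rintro m ⟨hm1, hm2⟩
      have hm0 : (0 : ℝ) < m := by exact_mod_cast hm1
      have hdiv : (padicDist p m x : ℝ) / m ≤ C := (div_le_iff₀ hm0).mpr hm2
      rw [← EReal.coe_div]
      exact EReal.coe_le_coe_iff.mpr hdiv
    exact lt_of_le_of_lt hle (EReal.coe_lt_top C)

lemma isPadicLiouville_neg {x : ℤ_[p]} (h : IsPadicLiouville p x) :
    IsPadicLiouville p (-x) := by
  rw [liouville_iff] at h ⊢
  obtain ⟨h1, C, hC, hinf⟩ := h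
  refine ⟨fun k hk => h1 (-k) ?_, C, hC, ?_⟩
  · push_cast
    rw [← hk]; ring
  · have hEq : BddSet p (-x) C = BddSet p x C := by
      ext m
      simp only [BddSet, Set.mem_setOf_eq, padicDist_neg]
    rw [hEq]
    exact hinf

lemma isPadicLiouville_add_int {x : ℤ_[p]} (k : ℤ) (h : IsPadicLiouville p x) :
    IsPadicLiouville p (x + (k : ℤ_[p])) := by
  rw [liouville_iff] at h ⊢
  obtain ⟨h1, C, hC, hinf⟩ := h
  refine ⟨fun j hj => h1 (j - k) ?_, C + k.natAbs, by positivity, ?_⟩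
  · push_cast
    rw [← hj]; ring
  · refine hinf.mono ?_
    rintro m ⟨hm1, hm2⟩
    refine ⟨hm1, ?_⟩
    have hd : padicDist p m (x + (k : ℤ_[p])) ≤ padicDist p m x + (k : ℤ).natAbs := by
      have h1' := padicDist_add_le m x ((k : ℤ) : ℤ_[p])
      have h2' := padicDist_intCast_le (p := p) m k
      omega
    have hm1' : (1 : ℝ) ≤ m := by exact_mod_cast hm1
    have hd' : (padicDist p m (x + (k : ℤ_[p])) : ℝ) ≤ (padicDist p m x : ℝ) + k.natAbs := by
      exact_mod_cast hd
    have : ((k.natAbs : ℝ)) ≤ (k.natAbs : ℝ) * m := le_mul_of_one_le_right (by positivity) hm1'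
    nlinarith

lemma not_liouville_of_int {x : ℤ_[p]} (h : IsIntPadic p x) : ¬ IsPadicLiouville p x := by
  obtain ⟨k, hk⟩ := h
  rintro ⟨h1, -⟩
  exact h1 k hk

end AuxLiou

/-! ### Growth, rigidity and pigeonhole lemmas -/

section AuxRigid
variable {p : ℕ} [hp : Fact p.Prime]

lemma lin_lt_pow_eventually (K : ℝ) : ∀ᶠ m : ℕ in atTop, K * m < (p : ℝ) ^ m := by
  have hp1 : (1 : ℝ) < p := by exact_mod_cast hp.1.one_lt
  have hK : (0 : ℝ) < |K| + 1 := by positivity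
  have hlo := isLittleO_coe_const_pow_of_one_lt (R := ℝ) hp1
  have hb := hlo.def (show (0 : ℝ) < (|K| + 1)⁻¹ by positivity)
  filter_upwards [hb, eventually_ge_atTop 1] with m hm hm1
  have hpow : (0 : ℝ) < (p : ℝ) ^ m := by positivity
  have hm' : (m : ℝ) ≤ (|K| + 1)⁻¹ * (p : ℝ) ^ m := by
    have e1 : ‖(m : ℝ)‖ = (m : ℝ) := by
      rw [Real.norm_eq_abs]; exact abs_of_nonneg (by positivity)
    have e2 : ‖(p : ℝ) ^ m‖ = (p : ℝ) ^ m := by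
      rw [Real.norm_eq_abs]; exact abs_of_pos hpow
    rwa [e1, e2] at hm
  have h1 : K * m ≤ |K| * m :=
    mul_le_mul_of_nonneg_right (le_abs_self K) (Nat.cast_nonneg m)
  have h2 : |K| * m < (|K| + 1) * m := by
    have hm0 : (0 : ℝ) < m := by exact_mod_cast hm1
    nlinarith
  calc K * m ≤ |K| * m := h1
    _ < (|K| + 1) * m := h2
    _ ≤ (|K| + 1) * ((|K| + 1)⁻¹ * (p : ℝ) ^ m) := mul_le_mul_of_nonneg_left hm' hK.le
    _ = (p : ℝ) ^ m := by field_simp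

lemma pigeon {n : ℕ} {S : Set ℕ} (hS : S.Infinite) (g : ℕ → Fin n) :
    ∃ j, {m | m ∈ S ∧ g m = j}.Infinite := by
  by_contra hcon
  push_neg at hcon
  have hsub : S ⊆ ⋃ j, {m | m ∈ S ∧ g m = j} := fun m hm => Set.mem_iUnion.mpr ⟨g m, hm, rfl⟩
  exact hS ((Set.finite_iUnion hcon).subset hsub)

lemma rigid {x : ℤ_[p]} {C N : ℝ} {M : ℕ}
    (hx : ∀ m, M ≤ m → (padicDist p m x : ℝ) ≤ C * m + N) : ∃ k : ℤ, x = (k : ℤ_[p]) := by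
  choose hh hh1 hh2 using fun m => padicDist_spec (p := p) m x
  have hbound : ∀ m, M ≤ m → |(hh m : ℝ)| ≤ |C| * m + |N| := by
    intro m hm
    have h1 := hx m hm
    rw [← hh1 m] at h1
    have h2 : ((hh m).natAbs : ℝ) = |(hh m : ℝ)| := by
      rw [Nat.cast_natAbs, Int.cast_abs]
    have h3 : C * m + N ≤ |C| * m + |N| := by
      have : (0 : ℝ) ≤ (m : ℝ) := Nat.cast_nonneg m
      have := mul_le_mul_of_nonneg_right (le_abs_self C) this
      have := le_abs_self N
      linarith
    linarith [h2 ▸ h1]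
  have key : ∀ᶠ m : ℕ in atTop, hh (m + 1) = hh m := by
    filter_upwards [lin_lt_pow_eventually (p := p) (2 * |C| + |C| + 2 * |N|),
      eventually_ge_atTop (max M 1)] with m hpow hm
    have hmM : M ≤ m := le_trans (le_max_left _ _) hm
    have hm1 : 1 ≤ m := le_trans (le_max_right _ _) hm
    have d1 := hh2 m
    have d2 : (p : ℤ_[p]) ^ m ∣ x - ((hh (m + 1) : ℤ) : ℤ_[p]) :=
      dvd_trans (pow_dvd_pow _ (Nat.le_succ m)) (hh2 (m + 1))
    have diff : (p : ℤ_[p]) ^ m ∣ ((hh (m + 1) - hh m : ℤ) : ℤ_[p]) := by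
      have := dvd_sub d1 d2
      push_cast at this ⊢
      convert this using 1
      ring
    have hint : (p ^ m : ℤ) ∣ hh (m + 1) - hh m := (PadicInt.pow_p_dvd_int_iff m _).mp diff
    have habs : |hh (m + 1) - hh m| < (p : ℤ) ^ m := by
      have b1 := hbound (m + 1) (le_trans hmM (Nat.le_succ m))
      have b2 := hbound m hmM
      have hR : |(hh (m + 1) : ℝ) - (hh m : ℝ)| < (p : ℝ) ^ m := by
        have habs' : |(hh (m + 1) : ℝ) - (hh m : ℝ)| ≤
            (|C| * (m + 1) + |N|) + (|C| * m + |N|) := by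
          calc |(hh (m + 1) : ℝ) - (hh m : ℝ)| ≤ |(hh (m + 1) : ℝ)| + |(hh m : ℝ)| :=
                abs_sub _ _
            _ ≤ _ := by push_cast at b1 ⊢; linarith
        have hlin : (|C| * ((m : ℝ) + 1) + |N|) + (|C| * m + |N|) ≤
            (2 * |C| + |C| + 2 * |N|) * m := by
          have hm1' : (1 : ℝ) ≤ (m : ℝ) := by exact_mod_cast hm1
          nlinarith [abs_nonneg C, abs_nonneg N]
        linarith
      rw [show ((hh (m + 1) : ℝ) - (hh m : ℝ)) = ((hh (m + 1) - hh m : ℤ) : ℝ) by push_cast; ring]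
        at hR
      rw [← Int.cast_abs] at hR
      exact_mod_cast hR
    have := Int.eq_zero_of_abs_lt_dvd hint habs
    omega
  obtain ⟨M₂, hM₂⟩ := eventually_atTop.mp key
  have hconst : ∀ m, M₂ ≤ m → hh m = hh M₂ := by
    intro m hm
    induction m, hm using Nat.le_induction with
    | base => rfl
    | succ m hm ih => rw [hM₂ m hm, ih]
  refine ⟨hh M₂, ?_⟩
  have hdvd : ∀ m, M₂ ≤ m → (p : ℤ_[p]) ^ m ∣ x - ((hh M₂ : ℤ) : ℤ_[p]) := by
    intro m hm
    have := hh2 m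
    rwa [hconst m hm] at this
  by_contra hne
  have hsub : x - ((hh M₂ : ℤ) : ℤ_[p]) ≠ 0 := sub_ne_zero.mpr hne
  have hnorm : 0 < ‖x - ((hh M₂ : ℤ) : ℤ_[p])‖ := norm_pos_iff.mpr hsub
  obtain ⟨k, hk⟩ := PadicInt.exists_pow_neg_lt p hnorm
  have h1 : ‖x - ((hh M₂ : ℤ) : ℤ_[p])‖ ≤ (p : ℝ) ^ (-((max k M₂ : ℕ) : ℤ)) := by
    rw [PadicInt.norm_le_pow_iff_mem_span_pow, Ideal.mem_span_singleton]
    exact hdvd _ (le_max_right _ _)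
  have h2 : (p : ℝ) ^ (-((max k M₂ : ℕ) : ℤ)) ≤ (p : ℝ) ^ (-(k : ℤ)) := by
    apply zpow_le_zpow_right₀
    · exact_mod_cast hp.1.one_lt.le
    · simp only [neg_le_neg_iff]
      exact_mod_cast le_max_left k M₂
  linarith

end AuxRigid

set_option maxHeartbeats 2000000 in
/-- If `A` and `B` are weakly equivalent and `A` is p-adic
non-Liouville, then there are Liouville partitions `A = A₁ ∪ A₂` and `B = B₁ ∪ B₂` with
(a) `A₁, B₁` consisting entirely of integers, and (b) `A₂, B₂` weakly equivalent and
containing no integers and no p-adic Liouville numbers.  In particular `B` is also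
p-adic non-Liouville. -/
theorem weaklyEquivalent_nonLiouville_split
    (p : ℕ) [Fact p.Prime] (A B : Multiset ℤ_[p])
    (h : WeaklyEquivalent p A B)
    (hA : PadicNonLiouvilleMultiset p A) :
    ∃ A1 A2 B1 B2 : Multiset ℤ_[p],
      IsLiouvillePartition p A ![A1, A2] ∧
      IsLiouvillePartition p B ![B1, B2] ∧
      (∀ x ∈ A1, ∃ n : ℤ, x = (n : ℤ_[p])) ∧
      (∀ x ∈ B1, ∃ n : ℤ, x = (n : ℤ_[p])) ∧
      WeaklyEquivalent p A2 B2 ∧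
      (∀ x ∈ A2, (¬ ∃ n : ℤ, x = (n : ℤ_[p])) ∧ ¬ IsPadicLiouville p x) ∧
      (∀ x ∈ B2, (¬ ∃ n : ℤ, x = (n : ℤ_[p])) ∧ ¬ IsPadicLiouville p x) ∧
      PadicNonLiouvilleMultiset p B := by
  classical
  obtain ⟨n, a, b, c, hAeq, hBeq, hc, hweak⟩ := h
  -- choose permutations for every m
  have hweak' : ∀ m : ℕ, ∃ σ : Equiv.Perm (Fin n),
      1 ≤ m → ∀ i, (padicDist p m (a (σ i) - b i) : ℝ) ≤ c * m := by
    intro m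
    by_cases h1 : 1 ≤ m
    · obtain ⟨σ0, hσ0⟩ := hweak m h1
      exact ⟨σ0, fun _ => hσ0⟩
    · exact ⟨1, fun hh => absurd hh h1⟩
  choose σ hσ using hweak'
  -- A is non-Liouville entrywise
  have haL : ∀ j, ¬ IsPadicLiouville p (a j) := by
    intro j
    refine hA (a j) ?_
    rw [hAeq]
    exact Multiset.mem_coe.mpr (List.mem_ofFn.mpr ⟨j, rfl⟩)
  have haFin : ∀ j, ¬ IsIntPadic p (a j) → ∀ C : ℝ, (BddSet p (a j) C).Finite := by
    intro j hnint C
    by_contra hinfin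
    have hinfin' : (BddSet p (a j) C).Infinite := hinfin
    apply haL j
    rw [liouville_iff]
    refine ⟨fun k hk => hnint ⟨k, hk⟩, max C 1, lt_max_iff.mpr (Or.inr one_pos), ?_⟩
    refine hinfin'.mono ?_
    rintro m ⟨hm1, hm2⟩
    refine ⟨hm1, hm2.trans ?_⟩
    exact mul_le_mul_of_nonneg_right (le_max_left _ _) (Nat.cast_nonneg m)
  -- integer values of entries of `a` and a bound `N` for them
  set KK : Fin n → ℤ := fun j => if h : IsIntPadic p (a j) then h.choose else 0 with hKK
  have hKKspec : ∀ j, IsIntPadic p (a j) → a j = ((KK j : ℤ) : ℤ_[p]) := by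
    intro j hj
    rw [hKK]
    simp only [dif_pos hj]
    exact hj.choose_spec
  set N : ℝ := ∑ j : Fin n, ((KK j).natAbs : ℝ) with hN
  have hNnonneg : 0 ≤ N := Finset.sum_nonneg fun j _ => Nat.cast_nonneg _
  have hNbound : ∀ j, ((KK j).natAbs : ℝ) ≤ N := by
    intro j
    rw [hN]
    exact Finset.single_le_sum (f := fun j => (((KK j).natAbs : ℝ)))
      (fun j _ => Nat.cast_nonneg _) (Finset.mem_univ j)
  -- Step 3 computation: at integer scales, b i is well approximated
  have hUbound : ∀ (i : Fin n) (m : ℕ), 1 ≤ m → IsIntPadic p (a (σ m i)) →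
      (padicDist p m (b i) : ℝ) ≤ (c + N) * m := by
    intro i m hm1 hint
    have t2 := hσ m hm1 i
    have hK := hKKspec _ hint
    have t1 := padicDist_le_add' m (b i) (a (σ m i))
    have t3 : padicDist p m (a (σ m i)) ≤ (KK (σ m i)).natAbs := by
      rw [hK]; exact padicDist_intCast_le m _
    have hm1' : (1 : ℝ) ≤ m := by exact_mod_cast hm1
    have t1' : (padicDist p m (b i) : ℝ) ≤
        (padicDist p m (a (σ m i) - b i) : ℝ) + (padicDist p m (a (σ m i)) : ℝ) := by
      exact_mod_cast t1
    have t3' : (padicDist p m (a (σ m i)) : ℝ) ≤ N :=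
      le_trans (by exact_mod_cast t3) (hNbound _)
    nlinarith
  -- Claim A : if b i is linearly approximable at infinitely many scales, it is an integer
  have claimA : ∀ i : Fin n, ∀ C : ℝ, (BddSet p (b i) C).Infinite → IsIntPadic p (b i) := by
    intro i C hinfT
    set U : Set ℕ := {m | 1 ≤ m ∧ IsIntPadic p (a (σ m i))} with hU
    -- T \ U is finite
    have hTU : ((BddSet p (b i) C) \ U).Finite := by
      by_contra hbad
      have hbad' : ((BddSet p (b i) C) \ U).Infinite := hbad
      obtain ⟨j, hj⟩ := pigeon hbad' (fun m => σ m i)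
      have hjn : ¬ IsIntPadic p (a j) := by
        obtain ⟨m, ⟨⟨hm1, -⟩, hmU⟩, hmj⟩ := hj.nonempty
        intro hint
        apply hmU
        refine ⟨hm1, ?_⟩
        rw [hmj]
        exact hint
      have hsub : {m | m ∈ (BddSet p (b i) C) \ U ∧ σ m i = j} ⊆ BddSet p (a j) (c + C) := by
        rintro m ⟨⟨⟨hm1, hmd⟩, -⟩, hmj⟩
        refine ⟨hm1, ?_⟩
        have t1 := padicDist_le_add m (a j) (b i)
        have t2 := hσ m hm1 i
        rw [hmj] at t2
        have t1' : (padicDist p m (a j) : ℝ) ≤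
            (padicDist p m (a j - b i) : ℝ) + (padicDist p m (b i) : ℝ) := by
          exact_mod_cast t1
        linarith
      exact absurd (hj.mono hsub) (Set.not_infinite.mpr (haFin j hjn (c + C)))
    have hUinf : U.Infinite := by
      by_contra hUf
      rw [Set.not_infinite] at hUf
      have hsub : BddSet p (b i) C ⊆ ((BddSet p (b i) C) \ U) ∪ U := by
        intro m hm
        by_cases hmu : m ∈ U
        · exact Or.inr hmu
        · exact Or.inl ⟨hm, hmu⟩
      exact hinfT ((hTU.union hUf).subset hsub)
    by_contra hbn
    -- complement of U is infinite (else rigidity applies)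
    have hcompl : {m | 1 ≤ m ∧ m ∉ U}.Infinite := by
      by_contra hf
      rw [Set.not_infinite] at hf
      obtain ⟨M0, hM0⟩ := hf.bddAbove
      have hrig : ∀ m, M0 + 1 ≤ m → (padicDist p m (b i) : ℝ) ≤ (c + N) * m + 0 := by
        intro m hm
        have hm1 : 1 ≤ m := by omega
        have hmU : m ∈ U := by
          by_contra hmu
          have := hM0 ⟨hm1, hmu⟩
          omega
        rw [add_zero]
        exact hUbound i m hm1 hmU.2
      exact hbn (rigid hrig)
    -- crossing points into the complement of U
    have hWinf : {m | 2 ≤ m ∧ m ∉ U ∧ (m - 1) ∈ U}.Infinite := by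
      apply Set.infinite_of_not_bddAbove
      rintro ⟨M0, hM0⟩
      obtain ⟨m₁, hm₁U, hm₁M⟩ := hUinf.exists_gt M0
      have hne : {m | m₁ < m ∧ (1 ≤ m ∧ m ∉ U)}.Nonempty := by
        obtain ⟨m₂, hm₂, hgt⟩ := hcompl.exists_gt m₁
        exact ⟨m₂, hgt, hm₂⟩
      set m₂ := sInf {m | m₁ < m ∧ (1 ≤ m ∧ m ∉ U)} with hm₂def
      obtain ⟨hm₂gt, hm₂1, hm₂nu⟩ := Nat.sInf_mem hne
      have hm₁1 : 1 ≤ m₁ := hm₁U.1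
      have h2 : 2 ≤ m₂ := by omega
      have hprev : (m₂ - 1) ∈ U := by
        rcases Nat.lt_or_ge m₁ (m₂ - 1) with hlt | hge
        · by_contra hnu
          have hmem : (m₂ - 1) ∈ {m | m₁ < m ∧ (1 ≤ m ∧ m ∉ U)} := ⟨hlt, by omega, hnu⟩
          have := Nat.sInf_le hmem
          omega
        · have heq : m₂ - 1 = m₁ := by omega
          rw [heq]
          exact hm₁U
      have hle : m₂ ≤ M0 :=
        hM0 (show m₂ ∈ {m | 2 ≤ m ∧ m ∉ U ∧ (m - 1) ∈ U} from ⟨h2, hm₂nu, hprev⟩)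
      omega
    obtain ⟨j, hj⟩ := pigeon hWinf (fun m => σ m i)
    have hjn : ¬ IsIntPadic p (a j) := by
      obtain ⟨m, hm⟩ := hj.nonempty
      obtain ⟨⟨h2, hmu, -⟩, hmj⟩ := hm
      intro hint
      apply hmu
      refine ⟨by omega, ?_⟩
      rw [hmj]
      exact hint
    -- the shifted scales give infinitely many good approximations of a j
    have hsub : (fun m => m - 1) '' {m | m ∈ {m | 2 ≤ m ∧ m ∉ U ∧ (m - 1) ∈ U} ∧ σ m i = j}
        ⊆ BddSet p (a j) (3 * c + 2 * N) := by
      rintro m' ⟨m, ⟨⟨h2, hmu, hU1⟩, hmj⟩, rfl⟩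
      have hm11 : 1 ≤ m - 1 := by omega
      refine ⟨hm11, ?_⟩
      have hm1 : 1 ≤ m := by omega
      have t2 := hσ m hm1 i
      rw [hmj] at t2
      have tmono : padicDist p (m - 1) (a j - b i) ≤ padicDist p m (a j - b i) :=
        padicDist_mono _ (by omega)
      have t1 := padicDist_le_add (m - 1) (a j) (b i)
      have t3 := hUbound i (m - 1) (by omega) hU1.2
      have hcast : ((m - 1 : ℕ) : ℝ) = (m : ℝ) - 1 := by
        have h1m : 1 ≤ m := hm1
        push_cast [h1m]
        ring
      have hm2 : (m : ℝ) ≤ 2 * ((m : ℝ) - 1) := by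
        have : (2 : ℝ) ≤ m := by exact_mod_cast h2
        linarith
      have t1' : (padicDist p (m - 1) (a j) : ℝ) ≤
          (padicDist p (m - 1) (a j - b i) : ℝ) + (padicDist p (m - 1) (b i) : ℝ) := by
        exact_mod_cast t1
      have tmono' : (padicDist p (m - 1) (a j - b i) : ℝ) ≤ (padicDist p m (a j - b i) : ℝ) := by
        exact_mod_cast tmono
      rw [hcast] at t3 ⊢
      have hm1R : (1 : ℝ) ≤ (m : ℝ) - 1 := by
        have : (2 : ℝ) ≤ m := by exact_mod_cast h2
        linarith
      nlinarith
    have hinj : Set.InjOn (fun m => m - 1)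
        {m | m ∈ {m | 2 ≤ m ∧ m ∉ U ∧ (m - 1) ∈ U} ∧ σ m i = j} := by
      rintro x ⟨⟨h2x, -, -⟩, -⟩ y ⟨⟨h2y, -, -⟩, -⟩ hxy
      simp only at hxy
      omega
    exact absurd ((hj.image hinj).mono hsub)
      (Set.not_infinite.mpr (haFin j hjn (3 * c + 2 * N)))
  -- consequences of Claim A
  have claimA' : ∀ i, ¬ IsIntPadic p (b i) → ∀ C : ℝ, (BddSet p (b i) C).Finite := by
    intro i hbn C
    by_contra hf
    exact hbn (claimA i C hf)
  have hbL : ∀ i, ¬ IsPadicLiouville p (b i) := by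
    intro i hL
    rw [liouville_iff] at hL
    obtain ⟨h1, C, hC, hinf⟩ := hL
    obtain ⟨k, hk⟩ := claimA i C hinf
    exact h1 k hk
  -- Claim B : eventually the permutation matches integer indices with integer indices
  have claimB : ∀ i : Fin n, ∃ M : ℕ, ∀ m, M ≤ m →
      (IsIntPadic p (b i) ↔ IsIntPadic p (a (σ m i))) := by
    intro i
    by_cases hbi : IsIntPadic p (b i)
    · obtain ⟨k, hk⟩ := hbi
      have hfin : {m | 1 ≤ m ∧ ¬ IsIntPadic p (a (σ m i))}.Finite := by
        by_contra hf
        have hf' : {m | 1 ≤ m ∧ ¬ IsIntPadic p (a (σ m i))}.Infinite := hf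
        obtain ⟨j, hj⟩ := pigeon hf' (fun m => σ m i)
        have hjn : ¬ IsIntPadic p (a j) := by
          obtain ⟨m, hm⟩ := hj.nonempty
          obtain ⟨⟨hm1, hmn⟩, hmj⟩ := hm
          rw [hmj] at hmn
          exact hmn
        refine absurd (hj.mono ?_) (Set.not_infinite.mpr (haFin j hjn (c + k.natAbs)))
        rintro m ⟨⟨hm1, -⟩, hmj⟩
        refine ⟨hm1, ?_⟩
        have t2 := hσ m hm1 i
        rw [hmj, hk] at t2
        have t1 := padicDist_le_add m (a j) ((k : ℤ) : ℤ_[p])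
        have t3 := padicDist_intCast_le (p := p) m k
        have t1' : (padicDist p m (a j) : ℝ) ≤
            (padicDist p m (a j - ((k : ℤ) : ℤ_[p])) : ℝ) +
            (padicDist p m (((k : ℤ) : ℤ_[p])) : ℝ) := by exact_mod_cast t1
        have t3' : (padicDist p m (((k : ℤ) : ℤ_[p])) : ℝ) ≤ (k.natAbs : ℝ) := by
          exact_mod_cast t3
        have hm1' : (1 : ℝ) ≤ m := by exact_mod_cast hm1
        have : ((k.natAbs : ℝ)) ≤ (k.natAbs : ℝ) * m :=
          le_mul_of_one_le_right (by positivity) hm1'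
        nlinarith
      obtain ⟨M0, hM0⟩ := hfin.bddAbove
      refine ⟨M0 + 1, fun m hm => ?_⟩
      constructor
      · intro _
        by_contra hna
        have : m ≤ M0 := hM0 ⟨by omega, hna⟩
        omega
      · intro _
        exact ⟨k, hk⟩
    · have hsub : {m | 1 ≤ m ∧ IsIntPadic p (a (σ m i))} ⊆ BddSet p (b i) (c + N) := by
        rintro m ⟨hm1, hint⟩
        exact ⟨hm1, hUbound i m hm1 hint⟩
      have hfin := (claimA' i hbi (c + N)).subset hsub
      obtain ⟨M0, hM0⟩ := hfin.bddAbove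
      refine ⟨M0 + 1, fun m hm => ?_⟩
      constructor
      · intro hb'
        exact absurd hb' hbi
      · intro ha'
        exfalso
        have : m ≤ M0 := hM0 ⟨by omega, ha'⟩
        omega
  choose Mf hMf using claimB
  -- a global threshold
  set M : ℕ := (Finset.univ.sup Mf) + 1 with hMdef
  have hM1 : 1 ≤ M := by omega
  have hkey : ∀ m, M ≤ m → ∀ i, (IsIntPadic p (b i) ↔ IsIntPadic p (a (σ m i))) := by
    intro m hm i
    refine hMf i m (le_trans ?_ hm)
    have := Finset.le_sup (f := Mf) (Finset.mem_univ i)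
    omega
  -- index subtypes for integer / non-integer positions of b
  let J2 := {i : Fin n // ¬ IsIntPadic p (b i)}
  let J1 := {i : Fin n // IsIntPadic p (b i)}
  let e2 : J2 ≃ Fin (Fintype.card J2) := Fintype.equivFin J2
  let e1 : J1 ≃ Fin (Fintype.card J1) := Fintype.equivFin J1
  set S1 : Multiset (Fin n) :=
    Multiset.map (fun s => ((e1.symm s : J1) : Fin n)) ↑(List.finRange (Fintype.card J1))
    with hS1def
  set S2 : Multiset (Fin n) :=
    Multiset.map (fun s => ((e2.symm s : J2) : Fin n)) ↑(List.finRange (Fintype.card J2))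
    with hS2def
  have hS1mem : ∀ i : Fin n, i ∈ S1 ↔ IsIntPadic p (b i) := by
    intro i
    rw [hS1def]
    constructor
    · intro hmem
      obtain ⟨s, -, rfl⟩ := Multiset.mem_map.mp hmem
      exact (e1.symm s).2
    · intro hq
      exact Multiset.mem_map.mpr ⟨e1 ⟨i, hq⟩, Multiset.mem_coe.mpr (List.mem_finRange _),
        by rw [Equiv.symm_apply_apply]⟩
  have hS2mem : ∀ i : Fin n, i ∈ S2 ↔ ¬ IsIntPadic p (b i) := by
    intro i
    rw [hS2def]
    constructor
    · intro hmem
      obtain ⟨s, -, rfl⟩ := Multiset.mem_map.mp hmem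
      exact (e2.symm s).2
    · intro hq
      exact Multiset.mem_map.mpr ⟨e2 ⟨i, hq⟩, Multiset.mem_coe.mpr (List.mem_finRange _),
        by rw [Equiv.symm_apply_apply]⟩
  have hS1nd : S1.Nodup :=
    Multiset.Nodup.map (Subtype.coe_injective.comp e1.symm.injective)
      (Multiset.coe_nodup.mpr (List.nodup_finRange _))
  have hS2nd : S2.Nodup :=
    Multiset.Nodup.map (Subtype.coe_injective.comp e2.symm.injective)
      (Multiset.coe_nodup.mpr (List.nodup_finRange _))
  have hSsum : S1 + S2 = ↑(List.finRange n) := by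
    have hnd : (S1 + S2).Nodup :=
      Multiset.nodup_add.mpr ⟨hS1nd, hS2nd, Multiset.disjoint_left.mpr
        (fun {x} hx1 hx2 => ((hS2mem x).mp hx2) ((hS1mem x).mp hx1))⟩
    rw [Multiset.Nodup.ext hnd (Multiset.coe_nodup.mpr (List.nodup_finRange n))]
    intro i
    rw [Multiset.mem_add]
    constructor
    · intro _
      exact Multiset.mem_coe.mpr (List.mem_finRange _)
    · intro _
      by_cases hq : IsIntPadic p (b i)
      · exact Or.inl ((hS1mem i).mpr hq)
      · exact Or.inr ((hS2mem i).mpr hq)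
  have hperm : Multiset.map (⇑(σ M)) ↑(List.finRange n) = (↑(List.finRange n) : Multiset (Fin n)) := by
    rw [Multiset.Nodup.ext
      (Multiset.Nodup.map (σ M).injective (Multiset.coe_nodup.mpr (List.nodup_finRange n)))
      (Multiset.coe_nodup.mpr (List.nodup_finRange n))]
    intro j
    constructor
    · intro _
      exact Multiset.mem_coe.mpr (List.mem_finRange _)
    · intro _
      exact Multiset.mem_map.mpr ⟨(σ M)⁻¹ j, Multiset.mem_coe.mpr (List.mem_finRange _),
        Equiv.apply_symm_apply _ _⟩
  -- splittings of A and B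
  have hAsplit : Multiset.map (fun i => a (σ M i)) S1 + Multiset.map (fun i => a (σ M i)) S2
      = A := by
    rw [← Multiset.map_add]
    have h1 : Multiset.map (fun i => a (σ M i)) (S1 + S2)
        = Multiset.map a (Multiset.map (⇑(σ M)) (S1 + S2)) := by
      rw [Multiset.map_map]
      rfl
    rw [h1, hSsum, hperm, hAeq, List.ofFn_eq_map]
    rw [Multiset.map_coe]
  have hBsplit : Multiset.map b S1 + Multiset.map b S2 = B := by
    rw [← Multiset.map_add, hSsum, hBeq, List.ofFn_eq_map]
    rw [Multiset.map_coe]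
  -- membership properties
  have hA1int : ∀ x ∈ Multiset.map (fun i => a (σ M i)) S1, IsIntPadic p x := by
    intro x hx
    obtain ⟨i, hi, rfl⟩ := Multiset.mem_map.mp hx
    exact (hkey M le_rfl i).mp ((hS1mem i).mp hi)
  have hB1int : ∀ x ∈ Multiset.map b S1, IsIntPadic p x := by
    intro x hx
    obtain ⟨i, hi, rfl⟩ := Multiset.mem_map.mp hx
    exact (hS1mem i).mp hi
  have hA2nonint : ∀ x ∈ Multiset.map (fun i => a (σ M i)) S2, ¬ IsIntPadic p x := by
    intro x hx
    obtain ⟨i, hi, rfl⟩ := Multiset.mem_map.mp hx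
    intro hint
    exact ((hS2mem i).mp hi) ((hkey M le_rfl i).mpr hint)
  have hB2nonint : ∀ x ∈ Multiset.map b S2, ¬ IsIntPadic p x := by
    intro x hx
    obtain ⟨i, hi, rfl⟩ := Multiset.mem_map.mp hx
    exact (hS2mem i).mp hi
  have hA2L : ∀ x ∈ Multiset.map (fun i => a (σ M i)) S2, ¬ IsPadicLiouville p x := by
    intro x hx
    obtain ⟨i, -, rfl⟩ := Multiset.mem_map.mp hx
    exact haL _
  have hB2L : ∀ x ∈ Multiset.map b S2, ¬ IsPadicLiouville p x := by
    intro x hx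
    obtain ⟨i, -, rfl⟩ := Multiset.mem_map.mp hx
    exact hbL _
  -- the cross condition for Liouville partitions
  have crossAB : ∀ (X1 X2 : Multiset ℤ_[p]), (∀ x ∈ X1, IsIntPadic p x) →
      (∀ y ∈ X2, ¬ IsIntPadic p y) → (∀ y ∈ X2, ¬ IsPadicLiouville p y) →
      ∀ g h' : Fin 2, g ≠ h' → ∀ x ∈ ![X1, X2] g, ∀ y ∈ ![X1, X2] h',
        ¬ ((∃ nn : ℤ, x - y = (nn : ℤ_[p])) ∨ IsPadicLiouville p (x - y)) := by
    intro X1 X2 h1 h2 h3 g h' hgh x hx y hy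
    fin_cases g <;> fin_cases h' <;>
      simp only [Matrix.cons_val_zero, Matrix.cons_val_one, Matrix.head_cons] at hx hy
    · exact absurd rfl hgh
    · obtain ⟨k, hk⟩ := h1 x hx
      rintro (⟨nn, hd⟩ | hL)
      · exact (h2 y hy) ⟨k - nn, by push_cast; linear_combination hk - hd⟩
      · have hneg := isPadicLiouville_neg hL
        have h2' := isPadicLiouville_add_int k hneg
        have heq : -(x - y) + ((k : ℤ) : ℤ_[p]) = y := by rw [← hk]; ring
        rw [heq] at h2'
        exact (h3 y hy) h2'
    · obtain ⟨k, hk⟩ := h1 y hy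
      rintro (⟨nn, hd⟩ | hL)
      · exact (h2 x hx) ⟨nn + k, by push_cast; linear_combination hd + hk⟩
      · have h2' := isPadicLiouville_add_int k hL
        have heq : (x - y) + ((k : ℤ) : ℤ_[p]) = x := by rw [← hk]; ring
        rw [heq] at h2'
        exact (h3 x hx) h2'
    · exact absurd rfl hgh
  -- enumerating functions for the non-integer parts
  let a2 : Fin (Fintype.card J2) → ℤ_[p] := fun s => a (σ M ((e2.symm s : J2) : Fin n))
  let b2 : Fin (Fintype.card J2) → ℤ_[p] := fun s => b ((e2.symm s : J2) : Fin n)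
  have hA2ofFn : Multiset.map (fun i => a (σ M i)) S2 = ↑(List.ofFn a2) := by
    rw [hS2def, Multiset.map_map, List.ofFn_eq_map]
    rfl
  have hB2ofFn : Multiset.map b S2 = ↑(List.ofFn b2) := by
    rw [hS2def, Multiset.map_map, List.ofFn_eq_map]
    rfl
  set D : ℕ := Finset.sup (Finset.range M ×ˢ (Finset.univ : Finset (Fin (Fintype.card J2))))
    (fun q => padicDist p q.1 (a2 q.2 - b2 q.2)) with hDdef
  set c₂ : ℝ := max c ((D : ℝ) + 1) with hc₂def
  have hc₂pos : 0 < c₂ := lt_of_lt_of_le hc (le_max_left _ _)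
  have hweak2 : WeaklyEquivalent p (Multiset.map (fun i => a (σ M i)) S2)
      (Multiset.map b S2) := by
    refine ⟨Fintype.card J2, a2, b2, c₂, hA2ofFn, hB2ofFn, hc₂pos, ?_⟩
    intro m hm1
    by_cases hmM : M ≤ m
    · -- use the permutation σ m, transported to the subindices
      have hmem : ∀ s : Fin (Fintype.card J2),
          ¬ IsIntPadic p (b ((σ M)⁻¹ (σ m ((e2.symm s : J2) : Fin n)))) := by
        intro s hint
        have h2' : IsIntPadic p (a (σ M ((σ M)⁻¹ (σ m ((e2.symm s : J2) : Fin n))))) :=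
          (hkey M le_rfl _).mp hint
        rw [Equiv.Perm.inv_def, Equiv.apply_symm_apply] at h2'
        exact (e2.symm s).2 ((hkey m hmM _).mpr h2')
      set f : Fin (Fintype.card J2) → Fin (Fintype.card J2) :=
        fun s => e2 ⟨(σ M)⁻¹ (σ m ((e2.symm s : J2) : Fin n)), hmem s⟩ with hfdef
      have hinj : Function.Injective f := by
        intro s t hst
        rw [hfdef] at hst
        have h1 := e2.injective hst
        have h2' : ((σ M)⁻¹ (σ m ((e2.symm s : J2) : Fin n)))
            = ((σ M)⁻¹ (σ m ((e2.symm t : J2) : Fin n))) := congrArg Subtype.val h1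
        have h3' := (σ M)⁻¹.injective h2'
        have h4' := (σ m).injective h3'
        exact e2.symm.injective (Subtype.coe_injective h4')
      refine ⟨Equiv.ofBijective f (Finite.injective_iff_bijective.mp hinj), ?_⟩
      intro s
      have hval : a2 (Equiv.ofBijective f (Finite.injective_iff_bijective.mp hinj) s)
          = a (σ m ((e2.symm s : J2) : Fin n)) := by
        show a2 (f s) = _
        rw [hfdef]
        show a (σ M ((e2.symm (e2 ⟨_, hmem s⟩) : J2) : Fin n)) = _
        rw [Equiv.symm_apply_apply]
        show a (σ M ((σ M)⁻¹ (σ m _))) = _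
        rw [Equiv.Perm.inv_def, Equiv.apply_symm_apply]
      rw [hval]
      have hbnd := hσ m hm1 ((e2.symm s : J2) : Fin n)
      calc (padicDist p m (a (σ m ((e2.symm s : J2) : Fin n)) - b2 s) : ℝ)
          ≤ c * m := hbnd
        _ ≤ c₂ * m := mul_le_mul_of_nonneg_right (le_max_left _ _) (Nat.cast_nonneg m)
    · -- small scales: identity permutation and the crude bound
      refine ⟨1, ?_⟩
      intro s
      have hmemD : (m, s) ∈ Finset.range M ×ˢ (Finset.univ : Finset (Fin (Fintype.card J2))) := by
        rw [Finset.mem_product]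
        exact ⟨Finset.mem_range.mpr (by omega), Finset.mem_univ s⟩
      have hD : padicDist p m (a2 s - b2 s) ≤ D := by
        rw [hDdef]
        exact Finset.le_sup (f := fun q => padicDist p q.1 (a2 q.2 - b2 q.2)) hmemD
      have hone : ((1 : Equiv.Perm (Fin (Fintype.card J2))) s) = s := rfl
      rw [hone]
      have hm1' : (1 : ℝ) ≤ m := by exact_mod_cast hm1
      have hDr : (padicDist p m (a2 s - b2 s) : ℝ) ≤ (D : ℝ) := by exact_mod_cast hD
      calc (padicDist p m (a2 s - b2 s) : ℝ) ≤ (D : ℝ) := hDr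
        _ ≤ c₂ := by
            have := le_max_right c ((D : ℝ) + 1)
            rw [hc₂def]
            linarith
        _ = c₂ * 1 := (mul_one _).symm
        _ ≤ c₂ * m := mul_le_mul_of_nonneg_left hm1' hc₂pos.le
  refine ⟨Multiset.map (fun i => a (σ M i)) S1, Multiset.map (fun i => a (σ M i)) S2,
    Multiset.map b S1, Multiset.map b S2, ⟨?_, crossAB _ _ hA1int hA2nonint hA2L⟩,
    ⟨?_, crossAB _ _ hB1int hB2nonint hB2L⟩, fun x hx => hA1int x hx,
    fun x hx => hB1int x hx, hweak2,
    fun x hx => ⟨hA2nonint x hx, hA2L x hx⟩, fun x hx => ⟨hB2nonint x hx, hB2L x hx⟩, ?_⟩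
  · rw [Fin.sum_univ_two]
    simp only [Matrix.cons_val_zero, Matrix.cons_val_one, Matrix.head_cons]
    exact hAsplit
  · rw [Fin.sum_univ_two]
    simp only [Matrix.cons_val_zero, Matrix.cons_val_one, Matrix.head_cons]
    exact hBsplit
  · intro x hx
    rw [hBeq] at hx
    have hx' := List.mem_ofFn.mp (Multiset.mem_coe.mp hx)
    obtain ⟨i, rfl⟩ := hx'
    exact hbL i
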